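/- Let δ ∈ (0, 1/2) and let q be a prime with q ≥ 3. For x = q^{1+δ} and any b ∈ {-1,1}, if one assumes the Brun–Titchmarsh bound π(u; q, b) ≤ 2u/(φ(q)·log(u/q)) for all u > q, then Σ_{p prime, 2q-1 ≤ p ≤ x, p ≡ b (mod q)} (log p)/p ≤ (2/(q-1))·(log x/log(x/q) + (log q)·log(log(x/q)/log 2) + log(x/q) + C) for some absolute constant C. -/

import Mathlib

open scoped Classical

lemma Icc_one_succ (a N : ℕ) (h : a ≤ N + 1) :
    Finset.Icc a (N+1) = insert (N+1) (Finset.Icc a N) := by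
  have h2 := Finset.Ico_insert_right (a := a) (b := N+1) h
  rw [Finset.Ico_add_one_right_eq_Icc] at h2
  exact h2.symm

lemma tel_sum_le (g u : ℕ → ℝ) (m N : ℕ) (hmN : m ≤ N)
    (h : ∀ n, m ≤ n → n < N → u n ≤ g (n+1) - g n) :
    ∑ n ∈ Finset.Ico m N, u n ≤ g N - g m := by
  induction N, hmN using Nat.le_induction with
  | base => simp
  | succ N hN ih =>
      rw [Finset.sum_Ico_succ_top hN]
      have h1 := h N hN (Nat.lt_succ_self N)
      have h2 := ih (fun n hn hn' => h n hn (by omega))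
      linarith

lemma abel_ineq (P : ℕ → Prop) [DecidablePred P] (f : ℕ → ℝ) (hf : ∀ n, 0 ≤ f n) (m N : ℕ)
    (hm : 1 ≤ m) (hmN : m ≤ N) :
    ∑ p ∈ (Finset.Icc m N).filter P, f p ≤
      (((Finset.Icc 1 N).filter P).card : ℝ) * f N +
      ∑ n ∈ Finset.Ico m N, (((Finset.Icc 1 n).filter P).card : ℝ) * (f n - f (n+1)) := by
  induction N, hmN using Nat.le_induction with
  | base =>
      simp only [Finset.Ico_self, Finset.sum_empty, add_zero, Finset.Icc_self]
      by_cases hP : P m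
      · rw [Finset.filter_singleton, if_pos hP, Finset.sum_singleton]
        have hcard : 1 ≤ ((Finset.Icc 1 m).filter P).card := by
          apply Finset.card_pos.mpr
          exact ⟨m, Finset.mem_filter.mpr ⟨Finset.mem_Icc.mpr ⟨hm, le_refl m⟩, hP⟩⟩
        have hc : (1:ℝ) ≤ ((Finset.Icc 1 m).filter P).card := by exact_mod_cast hcard
        have := hf m
        nlinarith
      · rw [Finset.filter_singleton, if_neg hP, Finset.sum_empty]
        exact mul_nonneg (Nat.cast_nonneg _) (hf m)
  | succ N hN ih =>
      have hins : Finset.Icc m (N+1) = insert (N+1) (Finset.Icc m N) :=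
        Icc_one_succ m N (by omega)
      have hins1 : Finset.Icc 1 (N+1) = insert (N+1) (Finset.Icc 1 N) :=
        Icc_one_succ 1 N (by omega)
      have hnotmem : (N+1) ∉ Finset.Icc m N := by simp
      have hnotmem1 : (N+1) ∉ Finset.Icc 1 N := by simp
      rw [hins, hins1, Finset.filter_insert, Finset.filter_insert,
        Finset.sum_Ico_succ_top hN]
      by_cases hP : P (N+1)
      · rw [if_pos hP, if_pos hP, Finset.sum_insert (by simp [hnotmem]),
          Finset.card_insert_of_notMem (by simp [hnotmem1])]
        push_cast
        nlinarith [ih, hf (N+1)]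
      · rw [if_neg hP, if_neg hP]
        nlinarith [ih, hf (N+1)]

lemma inner_bound (rn sn sn1 lq : ℝ) (hn : 5 ≤ rn) (hsn : 1/2 ≤ sn) (hsn1 : 1/2 ≤ sn1)
    (hdiff : sn1 ≤ sn + 1/rn) (hlq : 0 ≤ lq) :
    (sn1 + lq)/((rn+1)*sn) ≤
      1/(rn+1) + 2/(rn*(rn+1)) + lq/((rn+1)*sn1) + 4*lq/(rn*(rn+1)) := by
  have hn0 : (0:ℝ) < rn := by linarith
  have hn1 : (0:ℝ) < rn + 1 := by linarith
  have hsn0 : (0:ℝ) < sn := by linarith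
  have hsn10 : (0:ℝ) < sn1 := by linarith
  have hden : (0:ℝ) < (rn+1)*sn := mul_pos hn1 hsn0
  rw [add_div]
  have part1 : sn1/((rn+1)*sn) ≤ 1/(rn+1) + 2/(rn*(rn+1)) := by
    have i1 : sn1/((rn+1)*sn) ≤ (sn + 1/rn)/((rn+1)*sn) :=
      (div_le_div_iff_of_pos_right hden).mpr hdiff
    have i2 : (sn + 1/rn)/((rn+1)*sn) = 1/(rn+1) + 1/(rn*(rn+1)*sn) := by
      field_simp
    have i3 : 1/(rn*(rn+1)*sn) ≤ 2/(rn*(rn+1)) := by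
      rw [div_le_div_iff₀ (by positivity) (by positivity)]
      nlinarith [mul_le_mul_of_nonneg_left (show (1:ℝ) ≤ 2*sn by linarith)
        (show (0:ℝ) ≤ rn*(rn+1) by positivity)]
    linarith
  have part2 : lq/((rn+1)*sn) ≤ lq/((rn+1)*sn1) + 4*lq/(rn*(rn+1)) := by
    have j0 : rn*sn1 ≤ rn*sn + 1 := by
      have h := mul_le_mul_of_nonneg_left hdiff hn0.le
      have hinv : rn*(1/rn) = 1 := by field_simp
      nlinarith
    have j1 : 1/sn ≤ 1/sn1 + 4/rn := by
      rw [div_add_div _ _ hsn10.ne' hn0.ne', div_le_div_iff₀ hsn0 (by positivity)]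
      nlinarith [mul_le_mul hsn hsn1 (by norm_num) (by linarith : (0:ℝ) ≤ sn)]
    calc lq/((rn+1)*sn) = (lq/(rn+1)) * (1/sn) := by
          rw [div_mul_div_comm, mul_one]
      _ ≤ (lq/(rn+1)) * (1/sn1 + 4/rn) :=
          mul_le_mul_of_nonneg_left j1 (by positivity)
      _ = lq/((rn+1)*sn1) + 4*lq/(rn*(rn+1)) := by
          field_simp
  linarith

set_option maxHeartbeats 2000000 in
theorem BT_logsum_bound :
    ∃ C : ℝ, 0 < C ∧
      ∀ (δ : ℝ), 0 < δ → δ < 1 / 2 →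
      ∀ q : ℕ, q.Prime → 3 ≤ q →
      ∀ b : ℤ, (b = -1 ∨ b = 1) →
      (∀ u : ℝ, (q : ℝ) < u →
        ((((Finset.Icc 1 ⌊u⌋₊).filter
            (fun p : ℕ => p.Prime ∧ (p : ℤ) ≡ b [ZMOD (q : ℤ)])).card : ℝ) ≤
          2 * u / ((Nat.totient q : ℝ) * Real.log (u / q)))) →
      ∑ p ∈ (Finset.Icc (2 * q - 1) ⌊(q : ℝ) ^ ((1 : ℝ) + δ)⌋₊).filter
          (fun p : ℕ => p.Prime ∧ (p : ℤ) ≡ b [ZMOD (q : ℤ)]),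
        Real.log p / p ≤
      (2 / ((q : ℝ) - 1)) *
        (Real.log ((q : ℝ) ^ ((1 : ℝ) + δ)) / Real.log ((q : ℝ) ^ ((1 : ℝ) + δ) / q) +
         Real.log q * Real.log (Real.log ((q : ℝ) ^ ((1 : ℝ) + δ) / q) / Real.log 2) +
         Real.log ((q : ℝ) ^ ((1 : ℝ) + δ) / q) + C) := by
  refine ⟨5, by norm_num, ?_⟩
  intro δ hδ0 hδ2 q hq hq3 b hb H
  -- basic setup
  set x : ℝ := (q : ℝ) ^ ((1 : ℝ) + δ) with hxdef
  set L : ℝ := Real.log (x / q) with hLdef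
  set m : ℕ := 2 * q - 1 with hmdef
  set N : ℕ := ⌊x⌋₊ with hNdef
  set P : ℕ → Prop := fun p : ℕ => p.Prime ∧ (p : ℤ) ≡ b [ZMOD (q : ℤ)] with hPdef
  set A : ℕ → ℕ := fun n => ((Finset.Icc 1 n).filter P).card with hAdef
  have hq0 : (0:ℝ) < q := by positivity
  have hq3' : (3:ℝ) ≤ q := by exact_mod_cast hq3
  have hq1 : (1:ℝ) < q := by linarith
  have hlogq : 0 < Real.log q := Real.log_pos hq1
  have hlogq_lin : Real.log q ≤ (q:ℝ) - 1 := by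
    have := Real.log_le_sub_one_of_pos hq0
    linarith
  have hlogq3 : 3 * Real.log q ≤ 2 * (q:ℝ) - 1 := by
    have h1 : Real.log (Real.sqrt q) = Real.log q / 2 := Real.log_sqrt hq0.le
    have h2 : Real.log (Real.sqrt q) ≤ Real.sqrt q - 1 :=
      Real.log_le_sub_one_of_pos (Real.sqrt_pos.mpr hq0)
    have h3 : Real.sqrt q ^ 2 = (q:ℝ) := Real.sq_sqrt hq0.le
    have h4 : 0 ≤ Real.sqrt q := Real.sqrt_nonneg _
    nlinarith
  have hqx : (q:ℝ) < x := by
    have : (q:ℝ) ^ (1:ℝ) < (q:ℝ) ^ ((1:ℝ) + δ) :=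
      (Real.rpow_lt_rpow_left_iff hq1).mpr (by linarith)
    rwa [Real.rpow_one] at this
  have hx0 : 0 < x := lt_trans hq0 hqx
  have hxq : x / q = (q:ℝ) ^ (δ:ℝ) := by
    rw [hxdef, Real.rpow_add hq0, Real.rpow_one]
    field_simp
  have hL : L = δ * Real.log q := by rw [hLdef, hxq, Real.log_rpow hq0]
  have hL0 : 0 < L := by rw [hL]; positivity
  have hlogx : Real.log x = (1+δ) * Real.log q := Real.log_rpow hq0 _
  have hlog2pos : 0 < Real.log 2 := Real.log_pos (by norm_num)
  have hloglog2 : Real.log (Real.log 2) ≤ 0 :=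
    Real.log_nonpos (by positivity) (by have := Real.log_two_lt_d9; linarith)
  have hLdiv : Real.log (L / Real.log 2) = Real.log L - Real.log (Real.log 2) :=
    Real.log_div hL0.ne' hlog2pos.ne'
  by_cases hmN : m ≤ N
  case neg =>
    -- the sum is empty; RHS is nonnegative
    rw [Finset.Icc_eq_empty (by omega), Finset.filter_empty, Finset.sum_empty]
    have h1 : Real.log q / L ≤ Real.log x / L := by
      have hxx : Real.log q ≤ Real.log x := by rw [hlogx]; nlinarith
      gcongr
    have h2 : 1/L + Real.log L ≥ 1 := by
      have := Real.log_le_sub_one_of_pos (show (0:ℝ) < 1/L by positivity)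
      rw [one_div, Real.log_inv] at this
      have : -Real.log L ≤ 1/L - 1 := by rw [one_div]; linarith
      linarith
    have h4 : Real.log q * Real.log (Real.log 2) ≤ 0 :=
      mul_nonpos_of_nonneg_of_nonpos hlogq.le hloglog2
    have h5 : Real.log q / L = Real.log q * (1/L) := by ring
    have h6 : Real.log q * (1/L + Real.log L) ≥ Real.log q * 1 := by
      apply mul_le_mul_of_nonneg_left h2 hlogq.le
    apply mul_nonneg (div_nonneg (by norm_num) (by linarith))
    rw [hLdiv]
    nlinarith
  case pos =>
    have hm1 : 1 ≤ m := by omega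
    have hm5 : 5 ≤ m := by omega
    have hqm : q < m := by omega
    have hmcast : (m:ℝ) = 2*(q:ℝ) - 1 := by
      rw [hmdef, Nat.cast_sub (by omega : 1 ≤ 2*q)]; push_cast; ring
    have hNx : (N:ℝ) ≤ x := Nat.floor_le hx0.le
    have hxN1 : x < (N:ℝ) + 1 := Nat.lt_floor_add_one x
    have hmN' : (m:ℝ) ≤ (N:ℝ) := by exact_mod_cast hmN
    have hNR : 2*(q:ℝ) - 1 ≤ (N:ℝ) := by rw [← hmcast]; exact hmN'
    have hm0 : (0:ℝ) < m := by rw [hmcast]; linarith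
    have hN0 : (0:ℝ) < N := lt_of_lt_of_le hm0 hmN'
    have hq1' : ((q:ℝ)-1) ≠ 0 := by linarith
    have hfactor : (0:ℝ) ≤ 2/((q:ℝ)-1) := div_nonneg (by norm_num) (by linarith)
    -- half lower bound for s
    have hexphalf : Real.exp (1/2 : ℝ) ≤ 5/3 := by
      have he := Real.exp_one_lt_d9
      have h2 : Real.exp (1/2 : ℝ) * Real.exp (1/2 : ℝ) = Real.exp 1 := by
        rw [← Real.exp_add]; norm_num
      by_contra hcon
      push_neg at hcon
      have h3 : (25:ℝ)/9 < Real.exp (1/2:ℝ) * Real.exp (1/2:ℝ) := by nlinarith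
      rw [h2] at h3
      norm_num at he
      linarith
    have hs_half : ∀ n : ℕ, m ≤ n → 1/2 ≤ Real.log ((n:ℝ)/q) := by
      intro n hn
      have hnR : (m:ℝ) ≤ (n:ℝ) := by exact_mod_cast hn
      have hn0 : (0:ℝ) < n := lt_of_lt_of_le hm0 hnR
      have h53 : (5:ℝ)/3 ≤ (n:ℝ)/q := by
        rw [div_le_div_iff₀ (by norm_num) hq0]
        rw [hmcast] at hnR; linarith
      rw [← Real.le_log_iff_exp_le (by positivity)] at hexphalf
      have : Real.log (5/3 : ℝ) ≤ Real.log ((n:ℝ)/q) :=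
        Real.log_le_log (by norm_num) h53
      linarith
    -- L ≥ 1/2
    have hsmL : Real.log ((m:ℝ)/q) ≤ L := by
      rw [hLdef]
      apply Real.log_le_log (by positivity)
      have hmx : (m:ℝ) ≤ x := le_trans (by exact_mod_cast hmN) (Nat.floor_le hx0.le)
      gcongr
    have hLhalf : (1:ℝ)/2 ≤ L := le_trans (hs_half m le_rfl) hsmL
    -- Brun-Titchmarsh in convenient form
    have hBT : ∀ n : ℕ, q < n →
        (((Finset.Icc 1 n).filter P).card : ℝ) ≤
          2*(n:ℝ)/(((q:ℝ)-1) * Real.log ((n:ℝ)/q)) := by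
      intro n hn
      have h := H (n:ℝ) (by exact_mod_cast hn)
      rwa [Nat.floor_natCast, Nat.totient_prime hq,
        Nat.cast_sub (by omega : 1 ≤ q), Nat.cast_one] at h
    have hf : ∀ n : ℕ, 0 ≤ Real.log (n:ℝ) / (n:ℝ) :=
      fun n => div_nonneg (Real.log_natCast_nonneg n) (Nat.cast_nonneg n)
    have habel := abel_ineq P (fun n : ℕ => Real.log (n:ℝ) / (n:ℝ)) hf m N hm1 hmN
    -- boundary term T1
    have hAN : (((Finset.Icc 1 N).filter P).card : ℝ) ≤ 2*x/(((q:ℝ)-1)*L) := by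
      have h := H x hqx
      rwa [Nat.totient_prime hq, Nat.cast_sub (by omega : 1 ≤ q), Nat.cast_one] at h
    have hlogxnn : 0 ≤ Real.log x := by rw [hlogx]; positivity
    have hT1 : (((Finset.Icc 1 N).filter P).card : ℝ) * (Real.log (N:ℝ) / (N:ℝ)) ≤
        2/((q:ℝ)-1) * (Real.log x / L + 1) := by
      have hfN : Real.log (N:ℝ) / (N:ℝ) ≤ Real.log x / (N:ℝ) := by
        have := Real.log_le_log hN0 hNx
        gcongr
      have hst1 : (((Finset.Icc 1 N).filter P).card : ℝ) * (Real.log (N:ℝ) / (N:ℝ)) ≤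
          (2*x/(((q:ℝ)-1)*L)) * (Real.log x / (N:ℝ)) := by
        apply mul_le_mul hAN hfN (hf N)
        apply div_nonneg (by positivity)
        exact le_of_lt (mul_pos (by linarith : (0:ℝ) < (q:ℝ)-1) hL0)
      have hkey : 2*x*Real.log x ≤ 2*Real.log x*(N:ℝ) + 2*(L*(N:ℝ)) := by
        have e1 : Real.log x * (x - (N:ℝ)) ≤ Real.log x * 1 :=
          mul_le_mul_of_nonneg_left (by linarith) hlogxnn
        have e0 : (1+δ)*Real.log q ≤ (3/2)*Real.log q := by nlinarith [hlogq.le]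
        have e2 : (1/2)*(N:ℝ) ≤ L*(N:ℝ) := mul_le_mul_of_nonneg_right hLhalf hN0.le
        have e3 : Real.log x ≤ L*(N:ℝ) := by
          rw [hlogx]; nlinarith
        nlinarith
      have hD : (0:ℝ) < (((q:ℝ)-1)*L)*(N:ℝ) :=
        mul_pos (mul_pos (by linarith) hL0) hN0
      calc (((Finset.Icc 1 N).filter P).card : ℝ) * (Real.log (N:ℝ) / (N:ℝ))
          ≤ (2*x/(((q:ℝ)-1)*L)) * (Real.log x / (N:ℝ)) := hst1
        _ = (2*x*Real.log x)/((((q:ℝ)-1)*L)*(N:ℝ)) := by rw [div_mul_div_comm]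
        _ ≤ (2*Real.log x*(N:ℝ) + 2*(L*(N:ℝ)))/((((q:ℝ)-1)*L)*(N:ℝ)) :=
            (div_le_div_iff_of_pos_right hD).mpr hkey
        _ = 2/((q:ℝ)-1) * (Real.log x / L + 1) := by
            rw [div_eq_iff hD.ne']
            field_simp [hq1', hL0.ne']
    -- per-term bound for the middle sum
    have hmid : ∀ n : ℕ, m ≤ n → n < N →
        (((Finset.Icc 1 n).filter P).card : ℝ) *
          (Real.log (n:ℝ)/(n:ℝ) - Real.log ((n+1:ℕ):ℝ)/((n+1:ℕ):ℝ)) ≤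
        2/((q:ℝ)-1) * (1/((n:ℝ)+1) + 2/((n:ℝ)*((n:ℝ)+1))
          + Real.log q/(((n:ℝ)+1) * Real.log (((n:ℝ)+1)/q))
          + 4*Real.log q/((n:ℝ)*((n:ℝ)+1))) := by
      intro n hmn hnN
      push_cast
      have hnR : (m:ℝ) ≤ (n:ℝ) := by exact_mod_cast hmn
      have hn0 : (0:ℝ) < n := lt_of_lt_of_le hm0 hnR
      have hn1 : (0:ℝ) < (n:ℝ)+1 := by linarith
      have hsn : 1/2 ≤ Real.log ((n:ℝ)/q) := hs_half n hmn
      have hsn1 : 1/2 ≤ Real.log (((n:ℝ)+1)/q) := by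
        have := hs_half (n+1) (by omega)
        push_cast at this
        exact this
      have hsn0 : 0 < Real.log ((n:ℝ)/q) := by linarith
      have hsn10 : 0 < Real.log (((n:ℝ)+1)/q) := by linarith
      have hsplit : Real.log ((n:ℝ)+1) = Real.log (((n:ℝ)+1)/q) + Real.log q := by
        rw [Real.log_div (by linarith) hq0.ne']
        ring
      have hdiff : Real.log (((n:ℝ)+1)/q) ≤ Real.log ((n:ℝ)/q) + 1/(n:ℝ) := by
        have e1 : Real.log (((n:ℝ)+1)/q) - Real.log ((n:ℝ)/q)
            = Real.log (((n:ℝ)+1)/(n:ℝ)) := by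
          rw [Real.log_div (by linarith) hq0.ne', Real.log_div hn0.ne' hq0.ne',
            Real.log_div (by linarith : ((n:ℝ)+1) ≠ 0) hn0.ne']
          ring
        have e2 : Real.log (((n:ℝ)+1)/(n:ℝ)) ≤ ((n:ℝ)+1)/(n:ℝ) - 1 :=
          Real.log_le_sub_one_of_pos (by positivity)
        have e3 : ((n:ℝ)+1)/(n:ℝ) - 1 = 1/(n:ℝ) := by field_simp; ring
        linarith
      have hc1 : Real.log (n:ℝ)/(n:ℝ) - Real.log ((n:ℝ)+1)/((n:ℝ)+1)
          ≤ Real.log ((n:ℝ)+1)/((n:ℝ)*((n:ℝ)+1)) := by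
        have m1 : Real.log (n:ℝ) ≤ Real.log ((n:ℝ)+1) :=
          Real.log_le_log hn0 (by linarith)
        have m2 : Real.log (n:ℝ)/(n:ℝ) ≤ Real.log ((n:ℝ)+1)/(n:ℝ) := by gcongr
        have m3 : Real.log ((n:ℝ)+1)/(n:ℝ) - Real.log ((n:ℝ)+1)/((n:ℝ)+1)
            = Real.log ((n:ℝ)+1)/((n:ℝ)*((n:ℝ)+1)) := by
          field_simp
          ring
        linarith
      have hlogn1nn : 0 ≤ Real.log ((n:ℝ)+1) :=
        Real.log_nonneg (by linarith)
      have hcard := hBT n (by omega)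
      have step1 : (((Finset.Icc 1 n).filter P).card : ℝ) *
          (Real.log (n:ℝ)/(n:ℝ) - Real.log ((n:ℝ)+1)/((n:ℝ)+1)) ≤
          (2*(n:ℝ)/(((q:ℝ)-1) * Real.log ((n:ℝ)/q))) *
            (Real.log ((n:ℝ)+1)/((n:ℝ)*((n:ℝ)+1))) := by
        have a1 : (((Finset.Icc 1 n).filter P).card : ℝ) *
            (Real.log (n:ℝ)/(n:ℝ) - Real.log ((n:ℝ)+1)/((n:ℝ)+1)) ≤
            (((Finset.Icc 1 n).filter P).card : ℝ) *
            (Real.log ((n:ℝ)+1)/((n:ℝ)*((n:ℝ)+1))) :=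
          mul_le_mul_of_nonneg_left hc1 (Nat.cast_nonneg _)
        have a2 := mul_le_mul_of_nonneg_right hcard
          (show 0 ≤ Real.log ((n:ℝ)+1)/((n:ℝ)*((n:ℝ)+1)) by positivity)
        linarith
      have step2 : (2*(n:ℝ)/(((q:ℝ)-1) * Real.log ((n:ℝ)/q))) *
            (Real.log ((n:ℝ)+1)/((n:ℝ)*((n:ℝ)+1))) =
          2/((q:ℝ)-1) * (Real.log ((n:ℝ)+1)/(((n:ℝ)+1) * Real.log ((n:ℝ)/q))) := by
        field_simp
      have hn5 : (5:ℝ) ≤ (n:ℝ) := by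
        have : (5:ℕ) ≤ n := le_trans hm5 hmn
        exact_mod_cast this
      have inner : Real.log ((n:ℝ)+1)/(((n:ℝ)+1) * Real.log ((n:ℝ)/q)) ≤
          1/((n:ℝ)+1) + 2/((n:ℝ)*((n:ℝ)+1))
          + Real.log q/(((n:ℝ)+1) * Real.log (((n:ℝ)+1)/q))
          + 4*Real.log q/((n:ℝ)*((n:ℝ)+1)) := by
        rw [hsplit]
        exact inner_bound (n:ℝ) _ _ _ hn5 hsn hsn1 hdiff hlogq.le
      calc (((Finset.Icc 1 n).filter P).card : ℝ) *
          (Real.log (n:ℝ)/(n:ℝ) - Real.log ((n:ℝ)+1)/((n:ℝ)+1))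
          ≤ (2*(n:ℝ)/(((q:ℝ)-1) * Real.log ((n:ℝ)/q))) *
            (Real.log ((n:ℝ)+1)/((n:ℝ)*((n:ℝ)+1))) := step1
        _ = 2/((q:ℝ)-1) * (Real.log ((n:ℝ)+1)/(((n:ℝ)+1) * Real.log ((n:ℝ)/q))) := step2
        _ ≤ 2/((q:ℝ)-1) * (1/((n:ℝ)+1) + 2/((n:ℝ)*((n:ℝ)+1))
            + Real.log q/(((n:ℝ)+1) * Real.log (((n:ℝ)+1)/q))
            + 4*Real.log q/((n:ℝ)*((n:ℝ)+1))) :=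
          mul_le_mul_of_nonneg_left inner hfactor
    -- telescoping per-term for sum1
    have hper1 : ∀ n : ℕ, m ≤ n →
        1/((n:ℝ)+1) ≤ Real.log ((n+1:ℕ):ℝ) - Real.log (n:ℝ) := by
      intro n hmn
      have hnR : (m:ℝ) ≤ (n:ℝ) := by exact_mod_cast hmn
      have hn0 : (0:ℝ) < n := lt_of_lt_of_le hm0 hnR
      push_cast
      have e1 : Real.log ((n:ℝ)/((n:ℝ)+1)) ≤ (n:ℝ)/((n:ℝ)+1) - 1 :=
        Real.log_le_sub_one_of_pos (by positivity)
      have e2 : Real.log ((n:ℝ)/((n:ℝ)+1)) = Real.log (n:ℝ) - Real.log ((n:ℝ)+1) :=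
        Real.log_div hn0.ne' (by positivity)
      have e3 : (n:ℝ)/((n:ℝ)+1) - 1 = -(1/((n:ℝ)+1)) := by field_simp; ring
      linarith
    have hsum1 : ∑ n ∈ Finset.Ico m N, 1/((n:ℝ)+1) ≤ L := by
      have t := tel_sum_le (fun k : ℕ => Real.log (k:ℝ)) (fun n : ℕ => 1/((n:ℝ)+1))
        m N hmN (fun n hn _ => hper1 n hn)
      have hlogN : Real.log (N:ℝ) ≤ Real.log x := Real.log_le_log hN0 hNx
      have hlogm : Real.log (q:ℝ) ≤ Real.log (m:ℝ) :=
        Real.log_le_log hq0 (by rw [hmcast]; linarith)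
      have hLxq : L = Real.log x - Real.log q := by
        rw [hLdef]; exact Real.log_div hx0.ne' hq0.ne'
      linarith
    have hsum2 : ∑ n ∈ Finset.Ico m N, 2/((n:ℝ)*((n:ℝ)+1)) ≤ 1 := by
      have t := tel_sum_le (fun k : ℕ => -2/(k:ℝ)) (fun n : ℕ => 2/((n:ℝ)*((n:ℝ)+1)))
        m N hmN ?_
      · have hmr : (5:ℝ) ≤ (m:ℝ) := by exact_mod_cast hm5
        have h1 : (0:ℝ) ≤ 2/(N:ℝ) := by positivity
        have h2 : 2/(m:ℝ) ≤ 1 := by rw [div_le_one hm0]; linarith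
        have e : -2/((N:ℝ)) - (-2/(m:ℝ)) = 2/(m:ℝ) - 2/(N:ℝ) := by ring
        linarith
      · intro n hn _
        have hnR : (m:ℝ) ≤ (n:ℝ) := by exact_mod_cast hn
        have hn0 : (0:ℝ) < n := lt_of_lt_of_le hm0 hnR
        push_cast
        have e : -2/((n:ℝ)+1) - (-2/(n:ℝ)) = 2/((n:ℝ)*((n:ℝ)+1)) := by
          field_simp
          ring
        linarith
    have hsum3 : ∑ n ∈ Finset.Ico m N,
          Real.log q/(((n:ℝ)+1) * Real.log (((n:ℝ)+1)/q))
        ≤ Real.log q * (Real.log L - Real.log (Real.log ((m:ℝ)/q))) := by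
      have t := tel_sum_le (fun k : ℕ => Real.log q * Real.log (Real.log ((k:ℝ)/q)))
        (fun n : ℕ => Real.log q/(((n:ℝ)+1) * Real.log (((n:ℝ)+1)/q))) m N hmN ?_
      · have hsN : Real.log ((N:ℝ)/q) ≤ L := by
          rw [hLdef]
          apply Real.log_le_log (by positivity)
          gcongr
        have hsN0 : (0:ℝ) < Real.log ((N:ℝ)/q) := by linarith [hs_half N hmN]
        have hlogsN : Real.log (Real.log ((N:ℝ)/q)) ≤ Real.log L :=
          Real.log_le_log hsN0 hsN
        have hmono := mul_le_mul_of_nonneg_left hlogsN hlogq.le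
        have e : Real.log q * (Real.log L - Real.log (Real.log ((m:ℝ)/q)))
            = Real.log q * Real.log L
              - Real.log q * Real.log (Real.log ((m:ℝ)/q)) := by ring
        linarith
      · intro n hn _
        have hnR : (m:ℝ) ≤ (n:ℝ) := by exact_mod_cast hn
        have hn0 : (0:ℝ) < n := lt_of_lt_of_le hm0 hnR
        have hsn : 1/2 ≤ Real.log ((n:ℝ)/q) := hs_half n hn
        have hsn1 : 1/2 ≤ Real.log (((n:ℝ)+1)/q) := by
          have := hs_half (n+1) (by omega)
          push_cast at this
          exact this
        have hsn0 : (0:ℝ) < Real.log ((n:ℝ)/q) := by linarith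
        have hsn10 : (0:ℝ) < Real.log (((n:ℝ)+1)/q) := by linarith
        have k2 : 1/((n:ℝ)+1) ≤ Real.log (((n:ℝ)+1)/q) - Real.log ((n:ℝ)/q) := by
          have h := hper1 n hn
          push_cast at h
          have e1 : Real.log (((n:ℝ)+1)/q) = Real.log ((n:ℝ)+1) - Real.log q :=
            Real.log_div (by linarith) hq0.ne'
          have e2 : Real.log ((n:ℝ)/q) = Real.log (n:ℝ) - Real.log q :=
            Real.log_div hn0.ne' hq0.ne'
          linarith
        have u1 : Real.log (Real.log ((n:ℝ)/q) / Real.log (((n:ℝ)+1)/q))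
            ≤ Real.log ((n:ℝ)/q) / Real.log (((n:ℝ)+1)/q) - 1 :=
          Real.log_le_sub_one_of_pos (div_pos hsn0 hsn10)
        have u2 : Real.log (Real.log ((n:ℝ)/q) / Real.log (((n:ℝ)+1)/q))
            = Real.log (Real.log ((n:ℝ)/q)) - Real.log (Real.log (((n:ℝ)+1)/q)) :=
          Real.log_div hsn0.ne' hsn10.ne'
        have u3 : Real.log ((n:ℝ)/q) / Real.log (((n:ℝ)+1)/q) - 1
            = -((Real.log (((n:ℝ)+1)/q) - Real.log ((n:ℝ)/q)) / Real.log (((n:ℝ)+1)/q)) := by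
          field_simp; ring
        have u4 : (1/((n:ℝ)+1))/Real.log (((n:ℝ)+1)/q)
            ≤ (Real.log (((n:ℝ)+1)/q) - Real.log ((n:ℝ)/q))/Real.log (((n:ℝ)+1)/q) :=
          (div_le_div_iff_of_pos_right hsn10).mpr k2
        have u5 : (1/((n:ℝ)+1))/Real.log (((n:ℝ)+1)/q)
            = 1/(((n:ℝ)+1)*Real.log (((n:ℝ)+1)/q)) := by
          rw [div_div]
        have u6 : 1/(((n:ℝ)+1)*Real.log (((n:ℝ)+1)/q))
            ≤ Real.log (Real.log (((n:ℝ)+1)/q)) - Real.log (Real.log ((n:ℝ)/q)) := by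
          linarith
        have u7 := mul_le_mul_of_nonneg_left u6 hlogq.le
        push_cast
        have u8 : Real.log q * (1/(((n:ℝ)+1)*Real.log (((n:ℝ)+1)/q)))
            = Real.log q/(((n:ℝ)+1)*Real.log (((n:ℝ)+1)/q)) := by
          rw [mul_one_div]
        have u9 : Real.log q * (Real.log (Real.log (((n:ℝ)+1)/q)) - Real.log (Real.log ((n:ℝ)/q)))
            = Real.log q * Real.log (Real.log (((n:ℝ)+1)/q))
              - Real.log q * Real.log (Real.log ((n:ℝ)/q)) := by ring
        linarith [u7, u8, u9]
    have hsum4 : ∑ n ∈ Finset.Ico m N, 4*Real.log q/((n:ℝ)*((n:ℝ)+1)) ≤ 2 := by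
      have t := tel_sum_le (fun k : ℕ => -(4*Real.log q)/(k:ℝ))
        (fun n : ℕ => 4*Real.log q/((n:ℝ)*((n:ℝ)+1))) m N hmN ?_
      · have h1 : (0:ℝ) ≤ 4*Real.log q/(N:ℝ) := by positivity
        have h2 : 4*Real.log q/(m:ℝ) ≤ 2 := by
          rw [div_le_iff₀ hm0, hmcast]
          linarith
        have e : -(4*Real.log q)/((N:ℝ)) - (-(4*Real.log q)/(m:ℝ))
            = 4*Real.log q/(m:ℝ) - 4*Real.log q/(N:ℝ) := by ring
        linarith
      · intro n hn _
        have hnR : (m:ℝ) ≤ (n:ℝ) := by exact_mod_cast hn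
        have hn0 : (0:ℝ) < n := lt_of_lt_of_le hm0 hnR
        push_cast
        have e : -(4*Real.log q)/((n:ℝ)+1) - (-(4*Real.log q)/(n:ℝ))
            = 4*Real.log q/((n:ℝ)*((n:ℝ)+1)) := by
          field_simp
          ring
        linarith
    -- tail estimate
    have htail : Real.log q * (Real.log L - Real.log (Real.log ((m:ℝ)/q)))
        ≤ Real.log q * Real.log (L/Real.log 2) + 1 := by
      have hsmhalf : 1/2 ≤ Real.log ((m:ℝ)/q) := hs_half m le_rfl
      have hsm0 : (0:ℝ) < Real.log ((m:ℝ)/q) := by linarith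
      have hsm2 : Real.log ((m:ℝ)/q) ≤ Real.log 2 := by
        apply Real.log_le_log (by positivity)
        rw [div_le_iff₀ hq0, hmcast]
        linarith
      have u1 : Real.log (Real.log 2) - Real.log (Real.log ((m:ℝ)/q)) ≤
          (Real.log 2 - Real.log ((m:ℝ)/q))/Real.log ((m:ℝ)/q) := by
        have h := Real.log_le_sub_one_of_pos (div_pos hlog2pos hsm0)
        rw [Real.log_div hlog2pos.ne' hsm0.ne'] at h
        have e : Real.log 2/Real.log ((m:ℝ)/q) - 1
            = (Real.log 2 - Real.log ((m:ℝ)/q))/Real.log ((m:ℝ)/q) := by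
          field_simp
        linarith
      have u2 : (Real.log 2 - Real.log ((m:ℝ)/q))/Real.log ((m:ℝ)/q)
          ≤ 2*(Real.log 2 - Real.log ((m:ℝ)/q)) := by
        rw [div_le_iff₀ hsm0]
        nlinarith
      have u3 : Real.log 2 - Real.log ((m:ℝ)/q) ≤ 1/(m:ℝ) := by
        have e : Real.log 2 - Real.log ((m:ℝ)/q) = Real.log (2*(q:ℝ)/(m:ℝ)) := by
          rw [Real.log_div (by positivity) hm0.ne', Real.log_mul (by norm_num) hq0.ne',
            Real.log_div hm0.ne' hq0.ne']
          ring
        have h := Real.log_le_sub_one_of_pos (show (0:ℝ) < 2*(q:ℝ)/(m:ℝ) by positivity)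
        have e2 : 2*(q:ℝ)/(m:ℝ) - 1 = 1/(m:ℝ) := by
          rw [hmcast]
          have hne : 2*(q:ℝ)-1 ≠ 0 := by linarith
          field_simp; ring
        rw [e]
        linarith
      have u4 : Real.log q*(2/(m:ℝ)) ≤ 1 := by
        have e : Real.log q*(2/(m:ℝ)) = 2*Real.log q/(m:ℝ) := by ring
        rw [e, div_le_one hm0, hmcast]
        linarith
      have u5 : Real.log q*(Real.log (Real.log 2) - Real.log (Real.log ((m:ℝ)/q)))
          ≤ Real.log q*(2/(m:ℝ)) := by
        apply mul_le_mul_of_nonneg_left ?_ hlogq.le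
        have e : (2:ℝ)/(m:ℝ) = 2*(1/(m:ℝ)) := by ring
        rw [e]
        linarith
      have dist : Real.log q*(Real.log L - Real.log (Real.log ((m:ℝ)/q)))
          = Real.log q*Real.log (L/Real.log 2)
            + Real.log q*(Real.log (Real.log 2) - Real.log (Real.log ((m:ℝ)/q))) := by
        rw [hLdiv]; ring
      linarith
    -- assemble
    have habel' : ∑ p ∈ (Finset.Icc m N).filter P, Real.log (p:ℝ)/(p:ℝ) ≤
        (((Finset.Icc 1 N).filter P).card : ℝ) * (Real.log (N:ℝ)/(N:ℝ)) +
        ∑ n ∈ Finset.Ico m N, (((Finset.Icc 1 n).filter P).card : ℝ) *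
          (Real.log (n:ℝ)/(n:ℝ) - Real.log ((n+1:ℕ):ℝ)/((n+1:ℕ):ℝ)) := habel
    have hmidsum : ∑ n ∈ Finset.Ico m N, (((Finset.Icc 1 n).filter P).card : ℝ) *
          (Real.log (n:ℝ)/(n:ℝ) - Real.log ((n+1:ℕ):ℝ)/((n+1:ℕ):ℝ)) ≤
        ∑ n ∈ Finset.Ico m N, 2/((q:ℝ)-1) * (1/((n:ℝ)+1) + 2/((n:ℝ)*((n:ℝ)+1))
          + Real.log q/(((n:ℝ)+1) * Real.log (((n:ℝ)+1)/q))
          + 4*Real.log q/((n:ℝ)*((n:ℝ)+1))) := by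
      apply Finset.sum_le_sum
      intro n hn
      obtain ⟨h1, h2⟩ := Finset.mem_Ico.mp hn
      exact hmid n h1 h2
    have hsplitsum : ∑ n ∈ Finset.Ico m N, 2/((q:ℝ)-1) * (1/((n:ℝ)+1) + 2/((n:ℝ)*((n:ℝ)+1))
          + Real.log q/(((n:ℝ)+1) * Real.log (((n:ℝ)+1)/q))
          + 4*Real.log q/((n:ℝ)*((n:ℝ)+1)))
        = 2/((q:ℝ)-1) * ((∑ n ∈ Finset.Ico m N, 1/((n:ℝ)+1))
          + (∑ n ∈ Finset.Ico m N, 2/((n:ℝ)*((n:ℝ)+1)))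
          + (∑ n ∈ Finset.Ico m N, Real.log q/(((n:ℝ)+1) * Real.log (((n:ℝ)+1)/q)))
          + (∑ n ∈ Finset.Ico m N, 4*Real.log q/((n:ℝ)*((n:ℝ)+1)))) := by
      rw [← Finset.mul_sum, Finset.sum_add_distrib, Finset.sum_add_distrib,
        Finset.sum_add_distrib]
    have hbig : (∑ n ∈ Finset.Ico m N, 1/((n:ℝ)+1))
          + (∑ n ∈ Finset.Ico m N, 2/((n:ℝ)*((n:ℝ)+1)))
          + (∑ n ∈ Finset.Ico m N, Real.log q/(((n:ℝ)+1) * Real.log (((n:ℝ)+1)/q)))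
          + (∑ n ∈ Finset.Ico m N, 4*Real.log q/((n:ℝ)*((n:ℝ)+1)))
        ≤ L + 1 + (Real.log q * Real.log (L/Real.log 2) + 1) + 2 := by
      linarith
    have hmul := mul_le_mul_of_nonneg_left hbig hfactor
    have hring : 2/((q:ℝ)-1)*(Real.log x/L + 1)
          + 2/((q:ℝ)-1)*(L + 1 + (Real.log q*Real.log (L/Real.log 2) + 1) + 2)
        = 2/((q:ℝ)-1)*(Real.log x/L + Real.log q*Real.log (L/Real.log 2) + L + 5) := by
      ring
    linarith
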